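/- arXiv:1806.07888 — 2 statements merged into one kernel-verified Lean document; each statement's English description precedes it below -/
import Mathlib

section
/- For real x with 0 < x < π, ln(sin(x)/x) = −∑_{k=1}^∞ (ζ(2k)/(k·π^{2k}))·x^{2k}. -/
open Real Filter Topology

noncomputable def stmt4rr (x : ℝ) (j : ℕ) : ℝ := x ^ 2 / (π ^ 2 * ((j : ℝ) + 1) ^ 2)

lemma stmt4rr_pos {x : ℝ} (h1 : 0 < x) (j : ℕ) : 0 < stmt4rr x j := by
  have := pi_pos
  have hj : (0 : ℝ) < (j : ℝ) + 1 := by positivity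
  exact div_pos (by positivity) (by positivity)

lemma stmt4rr_lt_one {x : ℝ} (h1 : 0 < x) (h2 : x < π) (j : ℕ) : stmt4rr x j < 1 := by
  have hπ := pi_pos
  have hj : (1 : ℝ) ≤ (j : ℝ) + 1 := by
    have := Nat.cast_nonneg (α := ℝ) j; linarith
  rw [stmt4rr, div_lt_one (by positivity)]
  have hx2 : x ^ 2 < π ^ 2 := by nlinarith
  have h3 : π ^ 2 * 1 ≤ π ^ 2 * ((j : ℝ) + 1) ^ 2 := by nlinarith [sq_nonneg ((j : ℝ) + 1 - 1), sq_nonneg π]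
  linarith

lemma stmt4_stepA {x : ℝ} (h1 : 0 < x) (h2 : x < π) (j : ℕ) :
    HasSum (fun k : ℕ => (stmt4rr x j) ^ (k + 1) / ((k : ℝ) + 1))
      (-Real.log (1 - stmt4rr x j)) := by
  have hp := stmt4rr_pos h1 j
  have hl := stmt4rr_lt_one h1 h2 j
  exact hasSum_pow_div_log_of_abs_lt_one (by rw [abs_of_pos hp]; exact hl)

lemma stmt4_stepB {x : ℝ} (h1 : 0 < x) (h2 : x < π) :
    HasSum (fun j : ℕ => -Real.log (1 - stmt4rr x j)) (-Real.log (Real.sin x / x)) := by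
  have hπ := pi_pos
  have hsin : 0 < Real.sin x := Real.sin_pos_of_pos_of_lt_pi h1 h2
  have hfac : ∀ j : ℕ, 0 < 1 - stmt4rr x j := fun j => by
    linarith [stmt4rr_lt_one h1 h2 j]
  have hprod : Tendsto (fun n : ℕ => ∏ j ∈ Finset.range n, (1 - stmt4rr x j)) atTop
      (𝓝 (Real.sin x / x)) := by
    have h0 := Real.tendsto_euler_sin_prod (x / π)
    have hx : π * (x / π) = x := by field_simp
    rw [hx] at h0
    have h0' := h0.div_const x
    refine h0'.congr fun n => ?_
    rw [mul_comm, mul_div_assoc, div_self h1.ne', mul_one]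
    refine Finset.prod_congr rfl fun j _ => ?_
    rw [stmt4rr, div_pow, div_div]
  have hlog : Tendsto (fun n : ℕ => ∑ j ∈ Finset.range n, Real.log (1 - stmt4rr x j)) atTop
      (𝓝 (Real.log (Real.sin x / x))) := by
    have hc : ContinuousAt Real.log (Real.sin x / x) :=
      Real.continuousAt_log (by positivity)
    refine (hc.tendsto.comp hprod).congr fun n => ?_
    rw [Function.comp_apply, Real.log_prod fun j _ => (hfac j).ne']
  have hlog' : Tendsto (fun n : ℕ => ∑ j ∈ Finset.range n, -Real.log (1 - stmt4rr x j)) atTop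
      (𝓝 (-Real.log (Real.sin x / x))) := by
    simpa using hlog.neg
  have hnonneg : ∀ j : ℕ, 0 ≤ -Real.log (1 - stmt4rr x j) := fun j => by
    rw [neg_nonneg]
    exact Real.log_nonpos (by linarith [hfac j]) (by linarith [stmt4rr_pos h1 j])
  have hmono : Monotone (fun n : ℕ => ∑ j ∈ Finset.range n, -Real.log (1 - stmt4rr x j)) := by
    intro a b hab
    exact Finset.sum_le_sum_of_subset_of_nonneg (Finset.range_subset_range.2 hab)
      (fun j _ _ => hnonneg j)
  have hsummable : Summable (fun j : ℕ => -Real.log (1 - stmt4rr x j)) :=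
    summable_of_sum_range_le hnonneg (fun n => hmono.ge_of_tendsto hlog' n)
  rw [hsummable.hasSum_iff_tendsto_nat]
  exact hlog'

lemma stmt4_keyReal {x : ℝ} (h1 : 0 < x) (h2 : x < π) :
    Real.log (Real.sin x / x)
      = -∑' k : ℕ, (∑' n : ℕ, (1 : ℝ) / ((n : ℝ) + 1) ^ (2 * (k + 1)))
          / (((k : ℝ) + 1) * π ^ (2 * (k + 1))) * x ^ (2 * (k + 1)) := by
  have hπ := pi_pos
  set F : ℕ → ℕ → ℝ := fun j k => (stmt4rr x j) ^ (k + 1) / ((k : ℝ) + 1) with hF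
  have hFnonneg : ∀ j k, 0 ≤ F j k := fun j k => by
    have := (stmt4rr_pos h1 j).le
    exact div_nonneg (pow_nonneg this _) (by positivity)
  have hrowsum : ∀ j, HasSum (F j) (-Real.log (1 - stmt4rr x j)) := stmt4_stepA h1 h2
  have hB := stmt4_stepB h1 h2
  have hunc : Summable (Function.uncurry F) := by
    apply (summable_prod_of_nonneg (fun p => hFnonneg p.1 p.2)).mpr
    refine ⟨fun j => (hrowsum j).summable, ?_⟩
    refine hB.summable.congr fun j => ?_
    exact ((hrowsum j).tsum_eq).symm
  have hswap : ∑' (k : ℕ) (j : ℕ), F j k = ∑' (j : ℕ) (k : ℕ), F j k :=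
    Summable.tsum_comm' hunc (fun j => (hrowsum j).summable)
      (fun k => (hunc.prod_symm.prod_factor k))
  have houter : ∑' (j : ℕ) (k : ℕ), F j k = -Real.log (Real.sin x / x) := by
    rw [← hB.tsum_eq]
    exact tsum_congr fun j => (hrowsum j).tsum_eq
  have hinner : ∀ k : ℕ, ∑' j : ℕ, F j k
      = (∑' n : ℕ, (1 : ℝ) / ((n : ℝ) + 1) ^ (2 * (k + 1)))
          / (((k : ℝ) + 1) * π ^ (2 * (k + 1))) * x ^ (2 * (k + 1)) := by
    intro k
    have hterm : ∀ j : ℕ, F j k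
        = (x ^ (2 * (k + 1)) / (((k : ℝ) + 1) * π ^ (2 * (k + 1))))
            * ((1 : ℝ) / ((j : ℝ) + 1) ^ (2 * (k + 1))) := by
      intro j
      have hk : ((k : ℝ) + 1) ≠ 0 := by positivity
      have hj : (((j : ℝ) + 1) ^ (2 * (k + 1))) ≠ 0 := by positivity
      have hπ' : (π ^ (2 * (k + 1))) ≠ 0 := by positivity
      rw [hF]
      simp only [stmt4rr]
      rw [div_pow, mul_pow, ← pow_mul, ← pow_mul, ← pow_mul]
      rw [mul_comm 2 (k+1)] -- careful
      field_simp
    rw [tsum_congr hterm, tsum_mul_left]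
    ring
  rw [← tsum_congr hinner, hswap, houter, neg_neg]

theorem stmt_4 (x : ℝ) (h1 : 0 < x) (h2 : x < π) :
    (↑(Real.log (Real.sin x / x)) : ℂ)
      = -∑' k : ℕ, riemannZeta (2 * ((k : ℂ) + 1))
          / (((k : ℂ) + 1) * (π : ℂ) ^ (2 * (k + 1))) * (x : ℂ) ^ (2 * (k + 1)) := by
  have hterm : ∀ k : ℕ,
      riemannZeta (2 * ((k : ℂ) + 1)) / (((k : ℂ) + 1) * (π : ℂ) ^ (2 * (k + 1)))
          * (x : ℂ) ^ (2 * (k + 1))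
        = (((∑' n : ℕ, (1 : ℝ) / ((n : ℝ) + 1) ^ (2 * (k + 1)))
            / (((k : ℝ) + 1) * π ^ (2 * (k + 1))) * x ^ (2 * (k + 1)) : ℝ) : ℂ) := by
    intro k
    have h2k : (2 * ((k : ℂ) + 1)) = ((2 * (k + 1) : ℕ) : ℂ) := by push_cast; ring
    have hzeta : riemannZeta (2 * ((k : ℂ) + 1))
        = ∑' n : ℕ, (1 : ℂ) / ((n : ℂ) + 1) ^ (2 * (k + 1)) := by
      rw [h2k]
      have hre : 1 < Complex.re ((2 * (k + 1) : ℕ) : ℂ) := by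
        simp only [Complex.natCast_re]
        exact_mod_cast Nat.lt_of_lt_of_le Nat.one_lt_two (by omega)
      rw [zeta_eq_tsum_one_div_nat_add_one_cpow hre]
      exact tsum_congr fun n => by rw [Complex.cpow_natCast]
    have hzetaR : riemannZeta (2 * ((k : ℂ) + 1))
        = (((∑' n : ℕ, (1 : ℝ) / ((n : ℝ) + 1) ^ (2 * (k + 1))) : ℝ) : ℂ) := by
      rw [hzeta, Complex.ofReal_tsum]
      exact tsum_congr fun n => by push_cast; ring
    rw [hzetaR]
    push_cast
    ring
  rw [tsum_congr hterm, ← Complex.ofReal_tsum, ← Complex.ofReal_neg, Complex.ofReal_inj]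
  exact stmt4_keyReal h1 h2
end

section
/- For real x with 0 < x < 2π, the series ∑_{n=1}^∞ cos(nx)/n converges to −ln(2·sin(x/2)). -/
open Real

theorem stmt_5 (x : ℝ) (h1 : 0 < x) (h2 : x < 2 * π) :
    Filter.Tendsto (fun N : ℕ => ∑ n ∈ Finset.range N, Real.cos ((n + 1) * x) / (n + 1))
      Filter.atTop (nhds (-Real.log (2 * Real.sin (x / 2)))) := by
  set z : ℂ := Complex.exp (x * Complex.I) with hz_def
  have hcosx : Real.cos x < 1 := by
    rcases lt_or_eq_of_le (Real.cos_le_one x) with h | h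
    · exact h
    · exfalso
      have := (Real.cos_eq_one_iff_of_lt_of_lt (by linarith [Real.pi_pos]) h2).mp h
      linarith
  have hz1 : z ≠ 1 := by
    intro h
    have : (z : ℂ).re = 1 := by rw [h]; simp
    rw [hz_def, Complex.exp_ofReal_mul_I_re] at this
    linarith
  have hzabs : ‖z‖ = 1 := Complex.norm_exp_ofReal_mul_I x
  -- partial sums of z^(i+1) are bounded
  have hgeom : ∀ n : ℕ, ‖∑ i ∈ Finset.range n, z ^ (i + 1)‖ ≤ 2 / ‖1 - z‖ := by
    intro n
    have h1z : (1 : ℂ) - z ≠ 0 := sub_ne_zero.mpr (Ne.symm hz1)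
    have : ∑ i ∈ Finset.range n, z ^ (i + 1) = z * ((z ^ n - 1) / (z - 1)) := by
      rw [← geom_sum_eq hz1 n, Finset.mul_sum]
      exact Finset.sum_congr rfl fun i _ => by ring
    rw [this]
    rw [norm_mul, norm_div]
    have hznorm : ‖z‖ = 1 := hzabs
    rw [hznorm, one_mul]
    have h1 : ‖z ^ n - 1‖ ≤ 2 := by
      calc ‖z ^ n - 1‖ ≤ ‖z ^ n‖ + ‖(1 : ℂ)‖ := norm_sub_le _ _
        _ = 1 + 1 := by rw [norm_pow, hznorm]; simp
        _ = 2 := by norm_num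
    have h2' : ‖z - 1‖ = ‖(1 : ℂ) - z‖ := by rw [← norm_neg]; congr 1; ring
    rw [h2']
    gcongr
  -- Dirichlet's test: convergence of the complex series
  have hanti : Antitone fun n : ℕ => ((n : ℝ) + 1)⁻¹ := by
    intro m n hmn
    apply inv_anti₀ (by positivity)
    exact_mod_cast by omega
  have htend0 : Filter.Tendsto (fun n : ℕ => ((n : ℝ) + 1)⁻¹) Filter.atTop (nhds 0) := by
    simpa [one_div] using tendsto_one_div_add_atTop_nhds_zero_nat (𝕜 := ℝ)
  have hcauchy : CauchySeq fun n => ∑ i ∈ Finset.range n, ((i : ℝ) + 1)⁻¹ • z ^ (i + 1) :=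
    hanti.cauchySeq_series_mul_of_tendsto_zero_of_bounded htend0 hgeom
  obtain ⟨L, hL⟩ := cauchySeq_tendsto_of_complete hcauchy
  -- identify L via Abel's limit theorem
  have hsmul : ∀ i : ℕ, ((i : ℝ) + 1)⁻¹ • z ^ (i + 1) = z ^ (i + 1) / ((i : ℂ) + 1) := by
    intro i
    rw [Complex.real_smul, div_eq_inv_mul]
    push_cast
    ring
  set F : ℕ → ℂ := fun n => z ^ n / n with hF_def
  have hFsum : Filter.Tendsto (fun N => ∑ i ∈ Finset.range N, F i) Filter.atTop (nhds L) := by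
    rw [← Filter.tendsto_add_atTop_iff_nat 1]
    have : ∀ N : ℕ, ∑ i ∈ Finset.range (N + 1), F i
        = ∑ i ∈ Finset.range N, ((i : ℝ) + 1)⁻¹ • z ^ (i + 1) := by
      intro N
      rw [Finset.sum_range_succ']
      simp only [hF_def, Nat.cast_zero, div_zero, add_zero]
      exact Finset.sum_congr rfl fun i _ => by rw [hsmul]; push_cast; ring_nf
    simpa only [this] using hL
  have hAbel := Complex.tendsto_tsum_powerSeries_nhdsWithin_lt hFsum
  rw [Filter.tendsto_map'_iff] at hAbel
  -- compute the Abel means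
  have hmem : (1 - z) ∈ Complex.slitPlane := by
    left
    simp only [Complex.sub_re, Complex.one_re, hz_def, Complex.exp_ofReal_mul_I_re]
    linarith
  have h1z : (1 : ℂ) - z ≠ 0 := sub_ne_zero.mpr (Ne.symm hz1)
  have hL_eq : L = -Complex.log (1 - z) := by
    refine tendsto_nhds_unique hAbel ?_
    have hcont : Filter.Tendsto (fun r : ℝ => -Complex.log (1 - (r : ℂ) * z))
        (nhdsWithin 1 (Set.Iio 1)) (nhds (-Complex.log (1 - z))) := by
      have hinner : ContinuousAt (fun r : ℝ => 1 - (r : ℂ) * z) 1 := by fun_prop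
      have hc := ((continuousAt_clog (by simpa using hmem)).comp hinner).neg
      have hc' : ContinuousAt (fun r : ℝ => -Complex.log (1 - (r : ℂ) * z)) 1 := hc
      simpa [Function.comp_def] using hc'.continuousWithinAt.tendsto
    apply hcont.congr'
    filter_upwards [Ioo_mem_nhdsLT_of_mem
      (show (1:ℝ) ∈ Set.Ioc (-1 : ℝ) 1 by constructor <;> norm_num)] with r hr
    have hrz : ‖(r : ℂ) * z‖ < 1 := by
      rw [norm_mul, Complex.norm_real, hzabs, mul_one,
        Real.norm_eq_abs, abs_lt]
      exact ⟨by linarith [hr.1], hr.2⟩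
    have hs := Complex.hasSum_taylorSeries_neg_log hrz
    rw [← hs.tsum_eq]
    apply tsum_congr
    intro n
    simp only [Function.comp_apply, hF_def, mul_pow, div_mul_eq_mul_div]
    ring_nf
  -- Real part computations
  have habs : ‖1 - z‖ = 2 * Real.sin (x / 2) := by
    have hsin : Real.sin (x / 2) = Real.sqrt ((1 - Real.cos x) / 2) :=
      Real.sin_half_eq_sqrt (le_of_lt h1) (le_of_lt h2)
    have hre : (1 - z).re = 1 - Real.cos x := by
      simp [hz_def, Complex.exp_ofReal_mul_I_re]
    have him : (1 - z).im = -Real.sin x := by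
      simp [hz_def, Complex.exp_ofReal_mul_I_im]
    rw [Complex.norm_def, Complex.normSq_apply, hre, him, hsin]
    rw [show (1 - Real.cos x) * (1 - Real.cos x) + -Real.sin x * -Real.sin x
        = 4 * ((1 - Real.cos x) / 2) by nlinarith [Real.sin_sq_add_cos_sq x]]
    rw [Real.sqrt_mul (by norm_num : (0:ℝ) ≤ 4),
      show Real.sqrt 4 = 2 by
        rw [show (4:ℝ) = 2 ^ 2 by norm_num, Real.sqrt_sq (by norm_num : (0:ℝ) ≤ 2)]]
  -- conclude
  have hre_tendsto : Filter.Tendsto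
      (fun n => (∑ i ∈ Finset.range n, ((i : ℝ) + 1)⁻¹ • z ^ (i + 1)).re)
      Filter.atTop (nhds L.re) := (Complex.continuous_re.tendsto L).comp hL
  have hterm : ∀ i : ℕ, (((i : ℝ) + 1)⁻¹ • z ^ (i + 1)).re
      = Real.cos (((i : ℝ) + 1) * x) / ((i : ℝ) + 1) := by
    intro i
    have hpow : z ^ (i + 1) = Complex.exp ((((i : ℝ) + 1) * x : ℝ) * Complex.I) := by
      rw [hz_def, ← Complex.exp_nat_mul]
      congr 1
      push_cast
      ring
    rw [hpow, Complex.real_smul, Complex.re_ofReal_mul, Complex.exp_ofReal_mul_I_re]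
    rw [div_eq_inv_mul]
  have hLre : L.re = -Real.log (2 * Real.sin (x / 2)) := by
    rw [hL_eq, Complex.neg_re, Complex.log_re, habs]
  have : (fun N : ℕ => ∑ n ∈ Finset.range N, Real.cos ((n + 1) * x) / (n + 1))
      = fun n => (∑ i ∈ Finset.range n, ((i : ℝ) + 1)⁻¹ • z ^ (i + 1)).re := by
    funext N
    rw [Complex.re_sum]
    exact Finset.sum_congr rfl fun i _ => by rw [hterm i]
  rw [this, ← hLre]
  exact hre_tendsto
end
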